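/- arXiv:1301.3653 — 2 statements merged into one kernel-verified Lean document; each statement's English description precedes it below -/
import Mathlib

section
/- For all n ≥ 1 and k ≥ 0 with n ≡ k (mod 2), T(n,k) = (−1)^{(n−k)/2} · (−1)^n · Σ_{α=k}^{n} (−1)^α · 2^{n−α} · S2(n,α) · C(α−1, k−1) · α!/k!, where S2(n,α) are the Stirling numbers of the second kind. -/
open Real Finset

/-- Tangent numbers: tan t = Σ Tₙ tⁿ/n!. -/
noncomputable def tangentNumber (n : ℕ) : ℝ := iteratedDeriv n Real.tan 0

/-- Secant numbers: sec t = Σ Sₙ tⁿ/n!. -/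
noncomputable def secantNumber (n : ℕ) : ℝ := iteratedDeriv n (fun t : ℝ => 1 / Real.cos t) 0

/-- Higher-order tangent numbers: tanᵏ t / k! = Σ T(n,k) tⁿ/n!. -/
noncomputable def T (n k : ℕ) : ℝ :=
  iteratedDeriv n (fun t : ℝ => Real.tan t ^ k) 0 / (Nat.factorial k : ℝ)

/-- Higher-order secant numbers: sec t · tanᵏ t / k! = Σ S(n,k) tⁿ/n!. -/
noncomputable def S (n k : ℕ) : ℝ :=
  iteratedDeriv n (fun t : ℝ => Real.tan t ^ k / Real.cos t) 0 / (Nat.factorial k : ℝ)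

/-- Higher-order arctangent numbers: arctanᵏ t / k! = Σ T*(n,k) tⁿ/n!. -/
noncomputable def Tstar (n k : ℕ) : ℝ :=
  iteratedDeriv n (fun t : ℝ => Real.arctan t ^ k) 0 / (Nat.factorial k : ℝ)

/-- Binomial coefficient with integer lower index (0 if lower index is negative). -/
noncomputable def chooseZ (a : ℕ) (b : ℤ) : ℝ :=
  if 0 ≤ b then (a.choose b.toNat : ℝ) else 0

/-- Stirling numbers of the second kind. -/
noncomputable def stirling2 (n k : ℕ) : ℝ :=
  (1 / (k.factorial : ℝ)) *
    ∑ j ∈ Finset.range (k + 1), (-1 : ℝ) ^ (k - j) * (k.choose j : ℝ) * (j : ℝ) ^ n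

/-! ### Auxiliary combinatorial development -/

noncomputable def G (a m : ℕ) : ℝ :=
  ∑ j ∈ Finset.range (a + 1), (-1 : ℝ) ^ j * (a.choose j : ℝ) * (j : ℝ) ^ m

lemma G_zero (a : ℕ) (ha : 1 ≤ a) : G a 0 = 0 := by
  have h := Int.alternating_sum_range_choose (n := a)
  rw [if_neg (by omega)] at h
  have : ((∑ i ∈ range (a + 1), (-1 : ℤ) ^ i * (a.choose i) : ℤ) : ℝ) = 0 := by rw [h]; simp
  push_cast at this
  simpa [G] using this

lemma G_step (a m : ℕ) (ha : 1 ≤ a) :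
    G a (m + 1) = -(a : ℝ) * ∑ i ∈ range a, (-1 : ℝ) ^ i * ((a - 1).choose i : ℝ) * ((i : ℝ) + 1) ^ m := by
  obtain ⟨b, rfl⟩ : ∃ b, a = b + 1 := ⟨a - 1, by omega⟩
  rw [G, Finset.sum_range_succ']
  simp only [Nat.add_sub_cancel, pow_zero, Nat.cast_zero, mul_one, zero_pow (Nat.succ_ne_zero m),
    mul_zero, add_zero]
  rw [Finset.mul_sum]
  apply Finset.sum_congr rfl
  intro i hi
  have hc : ((b + 1).choose (i + 1) : ℝ) * ((i : ℝ) + 1) = ((b : ℝ) + 1) * (b.choose i : ℝ) := by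
    have := Nat.add_one_mul_choose_eq b i
    exact_mod_cast congrArg (fun x : ℕ => (x : ℝ)) this.symm
  push_cast
  linear_combination ((-1 : ℝ) ^ (i + 1) * ((i : ℝ) + 1) ^ m) * hc

lemma expand_pow (m : ℕ) (x : ℝ) : (x + 1) ^ m = ∑ r ∈ range (m + 1), (m.choose r : ℝ) * x ^ r := by
  rw [add_pow]
  apply Finset.sum_congr rfl
  intro r hr
  simp [mul_comm]

lemma sum_G (b m : ℕ) :
    ∑ i ∈ range (b + 1), (-1 : ℝ) ^ i * (b.choose i : ℝ) * ((i : ℝ) + 1) ^ m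
      = ∑ r ∈ range (m + 1), (m.choose r : ℝ) * G b r := by
  have h1 : ∀ i ∈ range (b + 1), (-1 : ℝ) ^ i * (b.choose i : ℝ) * ((i : ℝ) + 1) ^ m
      = ∑ r ∈ range (m + 1), (m.choose r : ℝ) * ((-1 : ℝ) ^ i * (b.choose i : ℝ) * (i : ℝ) ^ r) := by
    intro i _
    rw [expand_pow, Finset.mul_sum]
    apply Finset.sum_congr rfl
    intro r _
    ring
  rw [Finset.sum_congr rfl h1, Finset.sum_comm]
  apply Finset.sum_congr rfl
  intro r _
  rw [G, ← Finset.mul_sum]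

lemma G_vanish : ∀ m a : ℕ, m < a → G a m = 0 := by
  intro m
  induction m using Nat.strong_induction_on with
  | _ m IH =>
    intro a ha
    match m with
    | 0 => exact G_zero a (by omega)
    | Nat.succ m =>
      obtain ⟨b, rfl⟩ : ∃ b, a = b + 1 := ⟨a - 1, by omega⟩
      rw [G_step _ _ (by omega)]
      have hb : ∃ c, b = c + 1 := ⟨b - 1, by omega⟩
      obtain ⟨c, rfl⟩ := hb
      rw [show c + 1 + 1 - 1 = c + 1 from rfl, sum_G]
      have h2 : ∀ r ∈ range (m + 1), (m.choose r : ℝ) * G (c + 1) r = 0 := by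
        intro r hr
        rw [IH r (by have := Finset.mem_range.mp hr; omega) (c + 1)
          (by have := Finset.mem_range.mp hr; omega), mul_zero]
      rw [Finset.sum_congr rfl h2]
      simp

lemma G_diag : ∀ a : ℕ, G a a = (-1 : ℝ) ^ a * (a.factorial : ℝ) := by
  intro a
  induction a with
  | zero => simp [G]
  | succ b IH =>
    rw [G_step _ _ (by omega), show b + 1 - 1 = b from rfl, sum_G, Finset.sum_range_succ]
    have h2 : ∀ r ∈ range b, (b.choose r : ℝ) * G b r = 0 := by
      intro r hr
      rw [G_vanish r b (Finset.mem_range.mp hr), mul_zero]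
    rw [Finset.sum_congr rfl h2, IH]
    simp [Nat.factorial_succ]
    ring

lemma neg_one_pow_sub_eq {j a : ℕ} (h : j ≤ a) : (-1 : ℝ) ^ (a - j) = (-1) ^ a * (-1) ^ j := by
  have h1 : (-1 : ℝ) ^ (a - j) * (-1) ^ j = (-1) ^ a := by
    rw [← pow_add]; congr 1; omega
  have h2 : (-1 : ℝ) ^ j * (-1) ^ j = 1 := by rw [← mul_pow]; norm_num
  linear_combination ((-1 : ℝ) ^ j) * h1 + (-(-1 : ℝ) ^ (a - j)) * h2

lemma stirling2_eq_G (n a : ℕ) : stirling2 n a = (-1 : ℝ) ^ a / (a.factorial : ℝ) * G a n := by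
  rw [stirling2, G, Finset.mul_sum, Finset.mul_sum]
  apply Finset.sum_congr rfl
  intro j hj
  rw [neg_one_pow_sub_eq (by have := Finset.mem_range.mp hj; omega)]
  ring

lemma stirling2_vanish {n a : ℕ} (h : n < a) : stirling2 n a = 0 := by
  rw [stirling2_eq_G, G_vanish n a h, mul_zero]

lemma stirling2_diag (n : ℕ) : stirling2 n n = 1 := by
  rw [stirling2_eq_G, G_diag]
  have h2 : (-1 : ℝ) ^ n * (-1) ^ n = 1 := by rw [← mul_pow]; norm_num
  have h3 : (n.factorial : ℝ) ≠ 0 := Nat.cast_ne_zero.mpr n.factorial_ne_zero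
  field_simp
  linear_combination h2

lemma stirling2_zero_right {n : ℕ} (hn : 1 ≤ n) : stirling2 n 0 = 0 := by
  simp [stirling2, zero_pow (by omega : n ≠ 0)]

lemma G_rec (a n : ℕ) : G (a + 1) (n + 1) = (a + 1) * G (a + 1) n - (a + 1) * G a n := by
  have key : ∀ j ∈ range (a + 2),
      (-1 : ℝ) ^ j * ((a + 1).choose j : ℝ) * (j : ℝ) ^ (n + 1)
        - ((a : ℝ) + 1) * ((-1 : ℝ) ^ j * ((a + 1).choose j : ℝ) * (j : ℝ) ^ n)
      = -((a : ℝ) + 1) * ((-1 : ℝ) ^ j * (a.choose j : ℝ) * (j : ℝ) ^ n) := by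
    intro j hj
    have hj' : j ≤ a + 1 := by have := Finset.mem_range.mp hj; omega
    have hnat : (a + 1) * a.choose j = (a + 1).choose j * (a + 1 - j) := by
      rw [← Nat.choose_succ_right_eq, ← Nat.add_one_mul_choose_eq]
    have hc : ((a : ℝ) + 1) * (a.choose j : ℝ) = ((a + 1).choose j : ℝ) * ((a : ℝ) + 1 - (j : ℝ)) := by
      have := congrArg (fun x : ℕ => (x : ℝ)) hnat
      push_cast [Nat.cast_sub hj'] at this
      linarith [this]
    linear_combination ((-1 : ℝ) ^ j * (j : ℝ) ^ n) * hc
  have h1 : G (a + 1) (n + 1) - (a + 1) * G (a + 1) n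
      = ∑ j ∈ range (a + 2), (-((a : ℝ) + 1) * ((-1 : ℝ) ^ j * (a.choose j : ℝ) * (j : ℝ) ^ n)) := by
    rw [G, G, Finset.mul_sum, ← Finset.sum_sub_distrib]
    exact Finset.sum_congr rfl key
  have h2 : ∑ j ∈ range (a + 2), (-((a : ℝ) + 1) * ((-1 : ℝ) ^ j * (a.choose j : ℝ) * (j : ℝ) ^ n))
      = -((a : ℝ) + 1) * G a n := by
    rw [← Finset.mul_sum, G, Finset.sum_range_succ, Nat.choose_succ_self]
    simp
  rw [h2] at h1
  linarith [h1]

lemma stirling2_rec (n a : ℕ) :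
    stirling2 (n + 1) (a + 1) = (a + 1) * stirling2 n (a + 1) + stirling2 n a := by
  rw [stirling2_eq_G, stirling2_eq_G, stirling2_eq_G, G_rec]
  have h3 : (a.factorial : ℝ) ≠ 0 := Nat.cast_ne_zero.mpr a.factorial_ne_zero
  have h4 : ((a + 1).factorial : ℝ) = ((a : ℝ) + 1) * (a.factorial : ℝ) := by
    push_cast [Nat.factorial_succ]; ring
  rw [h4]
  field_simp
  ring

/-! ### The summand pieces -/

noncomputable def uu (m α : ℕ) : ℝ := (-1 : ℝ) ^ α * (2 : ℝ) ^ (m - α) * stirling2 m α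

noncomputable def cc (k α : ℕ) : ℝ :=
  chooseZ (α - 1) ((k : ℤ) - 1) * (α.factorial : ℝ) / (k.factorial : ℝ)

lemma uu_vanish {m α : ℕ} (h : m < α) : uu m α = 0 := by
  rw [uu, stirling2_vanish h, mul_zero]

lemma uu_zero {m : ℕ} (hm : 1 ≤ m) : uu m 0 = 0 := by
  rw [uu, stirling2_zero_right hm, mul_zero]

lemma uu_step (n b : ℕ) (hb : b ≤ n) :
    uu (n + 1) (b + 1) = 2 * ((b : ℝ) + 1) * uu n (b + 1) - uu n b := by
  rcases eq_or_lt_of_le hb with rfl | hlt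
  · rw [uu, uu, uu, stirling2_rec, stirling2_vanish (by omega : b < b + 1)]
    rw [show b + 1 - (b + 1) = 0 from by omega, show b - (b + 1) = 0 from by omega,
        show b - b = 0 from by omega]
    simp only [pow_zero]
    ring
  · rw [uu, uu, uu, stirling2_rec]
    rw [show n + 1 - (b + 1) = (n - (b + 1)) + 1 from by omega,
        show n - b = (n - (b + 1)) + 1 from by omega]
    rw [pow_succ, pow_succ]
    ring

lemma cc_succ (k α : ℕ) :
    cc (k + 1) (α + 1) = (α.choose k : ℝ) * ((α + 1).factorial : ℝ) / ((k + 1).factorial : ℝ) := by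
  rw [cc, chooseZ]
  have h1 : ((k + 1 : ℕ) : ℤ) - 1 = (k : ℤ) := by push_cast; ring
  rw [h1, if_pos (by positivity), Int.toNat_natCast, Nat.add_sub_cancel]

lemma cc_zero_left (α : ℕ) : cc 0 α = 0 := by
  rw [cc, chooseZ, if_neg (by norm_num)]
  simp

lemma cc_small {k α : ℕ} (h : 1 ≤ α) (h2 : α < k) : cc k α = 0 := by
  obtain ⟨b, rfl⟩ : ∃ b, α = b + 1 := ⟨α - 1, by omega⟩
  obtain ⟨c, rfl⟩ : ∃ c, k = c + 1 := ⟨k - 1, by omega⟩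
  rw [cc_succ, Nat.choose_eq_zero_of_lt (by omega)]
  simp

lemma r1 (m k : ℕ) : ((k : ℝ) + 1) * (m.choose (k + 1) : ℝ) = ((m : ℝ) - (k : ℝ)) * (m.choose k : ℝ) := by
  rcases le_or_gt (k + 1) m with h | h
  · have := Nat.choose_succ_right_eq m k
    have hc := congrArg (fun x : ℕ => (x : ℝ)) this
    push_cast [Nat.cast_sub (by omega : k ≤ m)] at hc
    linarith [hc]
  · rcases eq_or_lt_of_le (by omega : m ≤ k) with rfl | hlt
    · rw [Nat.choose_self, Nat.choose_succ_self]
      push_cast; ring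
    · rw [Nat.choose_eq_zero_of_lt hlt, Nat.choose_eq_zero_of_lt (by omega)]
      push_cast; ring

lemma key_poly (m i : ℕ) :
    2 * ((m : ℝ) + 1) * (m.choose (i + 1) : ℝ) - ((m : ℝ) + 2) * ((m + 1).choose (i + 1) : ℝ)
      + ((i : ℝ) + 2) * (m.choose i : ℝ) - ((i : ℝ) + 2) * (m.choose (i + 2) : ℝ) = 0 := by
  have hpascal : ((m + 1).choose (i + 1) : ℝ) = (m.choose i : ℝ) + (m.choose (i + 1) : ℝ) := by
    rw [Nat.choose_succ_succ]; push_cast; ring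
  have hr1a := r1 m i
  have hr1b : ((i : ℝ) + 2) * (m.choose (i + 2) : ℝ)
      = ((m : ℝ) - ((i : ℝ) + 1)) * (m.choose (i + 1) : ℝ) := by
    have := r1 m (i + 1); push_cast at this ⊢; linarith [this]
  linear_combination (-((m : ℝ) + 2)) * hpascal + (-1 : ℝ) * hr1b + hr1a

lemma key_term (j m : ℕ) :
    2 * ((m : ℝ) + 1) * cc (j + 1) (m + 1) - cc (j + 1) (m + 2) + cc j (m + 1)
      - ((j : ℝ) + 1) * ((j : ℝ) + 2) * cc (j + 2) (m + 1) = 0 := by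
  have hfac : ∀ a : ℕ, ((a : ℕ).factorial : ℝ) ≠ 0 :=
    fun a => Nat.cast_ne_zero.mpr a.factorial_ne_zero
  have hm2 : ((m + 2).factorial : ℝ) = ((m : ℝ) + 2) * ((m + 1).factorial : ℝ) := by
    rw [show m + 2 = (m + 1) + 1 from rfl, Nat.factorial_succ]; push_cast; ring
  rcases j with _ | i
  · rw [cc_zero_left]
    rw [cc_succ, show (0:ℕ)+2 = 1+1 from rfl, cc_succ, cc_succ]
    simp only [Nat.choose_zero_right, Nat.choose_one_right, Nat.factorial_one, Nat.cast_one,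
      Nat.cast_zero, Nat.cast_ofNat]
    rw [hm2]
    have h1 : ((1+1 : ℕ).factorial : ℝ) = 2 := by norm_num [Nat.factorial]
    rw [h1]
    field_simp
    ring
  · rw [show i + 1 + 1 = (i + 1) + 1 from rfl, cc_succ,
        show m + 2 = (m + 1) + 1 from rfl, cc_succ,
        show i + 1 = i + 1 from rfl, cc_succ,
        show i + 1 + 2 = (i + 2) + 1 from rfl, cc_succ]
    have e2 : ((i + 1 + 1).factorial : ℝ) = ((i : ℝ) + 2) * ((i + 1).factorial : ℝ) := by
      rw [Nat.factorial_succ]; push_cast; ring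
    have e3 : ((i + 2 + 1).factorial : ℝ) = ((i : ℝ) + 3) * ((i : ℝ) + 2) * ((i + 1).factorial : ℝ) := by
      rw [Nat.factorial_succ, Nat.factorial_succ]; push_cast; ring
    have heq : 2 * ((m : ℝ) + 1) * ((m.choose (i + 1) : ℝ) * (((m + 1).factorial : ℝ)) / ((i + 1 + 1).factorial : ℝ))
        - ((m + 1).choose (i + 1) : ℝ) * (((m + 1 + 1).factorial : ℝ)) / ((i + 1 + 1).factorial : ℝ)
        + (m.choose i : ℝ) * (((m + 1).factorial : ℝ)) / ((i + 1).factorial : ℝ)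
        - ((i : ℝ) + 1 + 1) * ((i : ℝ) + 1 + 2) * ((m.choose (i + 2) : ℝ) * (((m + 1).factorial : ℝ)) / ((i + 2 + 1).factorial : ℝ))
        = (((m + 1).factorial : ℝ) / ((i + 1 + 1).factorial : ℝ)) *
          (2 * ((m : ℝ) + 1) * (m.choose (i + 1) : ℝ) - ((m : ℝ) + 2) * ((m + 1).choose (i + 1) : ℝ)
            + ((i : ℝ) + 2) * (m.choose i : ℝ) - ((i : ℝ) + 2) * (m.choose (i + 2) : ℝ)) := by
      rw [show m + 1 + 1 = m + 2 from rfl, hm2, e2, e3]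
      have h1 := hfac (i + 1)
      have h2 := hfac (m + 1)
      have h3 : ((i : ℝ) + 2) ≠ 0 := by positivity
      have h4 : ((i : ℝ) + 3) ≠ 0 := by positivity
      field_simp
      ring
    push_cast at heq ⊢
    rw [heq, key_poly, mul_zero]

/-! ### The core summation identity -/

lemma core (n j : ℕ) (hn : 1 ≤ n) :
    ∑ α ∈ range (n + 2), uu (n + 1) α * cc (j + 1) α
      = -∑ α ∈ range (n + 2), uu n α * cc j α
        + ((j : ℝ) + 1) * ((j : ℝ) + 2) * ∑ α ∈ range (n + 2), uu n α * cc (j + 2) α := by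
  have main0 : ∑ α ∈ range (n + 2),
      (2 * (α : ℝ) * uu n α * cc (j + 1) α - uu n α * cc (j + 1) (α + 1)
        + uu n α * cc j α - ((j : ℝ) + 1) * ((j : ℝ) + 2) * (uu n α * cc (j + 2) α)) = 0 := by
    apply Finset.sum_eq_zero
    intro α hα
    match α with
    | 0 => rw [uu_zero hn]; ring
    | Nat.succ m =>
      have hk := key_term j m
      push_cast
      linear_combination (uu n (m + 1)) * hk
  have e1 : ∑ α ∈ range (n + 2), uu (n + 1) α * cc (j + 1) α
      = ∑ α ∈ range (n + 2), (2 * (α : ℝ) * uu n α) * cc (j + 1) α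
        - ∑ α ∈ range (n + 2), (if α = 0 then (0:ℝ) else uu n (α - 1)) * cc (j + 1) α := by
    rw [← Finset.sum_sub_distrib]
    apply Finset.sum_congr rfl
    intro α hα
    match α with
    | 0 => rw [uu_zero (by omega)]; simp
    | Nat.succ b =>
      have hb : b ≤ n := by have := Finset.mem_range.mp hα; omega
      rw [uu_step n b hb, if_neg (Nat.succ_ne_zero b), Nat.succ_sub_one]
      push_cast
      ring
  have e2 : ∑ α ∈ range (n + 2), (if α = 0 then (0:ℝ) else uu n (α - 1)) * cc (j + 1) α
      = ∑ α ∈ range (n + 2), uu n α * cc (j + 1) (α + 1) := by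
    rw [Finset.sum_range_succ' (fun α => (if α = 0 then (0:ℝ) else uu n (α - 1)) * cc (j + 1) α) (n + 1),
        Finset.sum_range_succ (fun α => uu n α * cc (j + 1) (α + 1)) (n + 1),
        uu_vanish (by omega : n < n + 1)]
    simp
  have expand : ∑ α ∈ range (n + 2),
      (2 * (α : ℝ) * uu n α * cc (j + 1) α - uu n α * cc (j + 1) (α + 1)
        + uu n α * cc j α - ((j : ℝ) + 1) * ((j : ℝ) + 2) * (uu n α * cc (j + 2) α))
      = ∑ α ∈ range (n + 2), (2 * (α : ℝ) * uu n α) * cc (j + 1) α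
        - ∑ α ∈ range (n + 2), uu n α * cc (j + 1) (α + 1)
        + ∑ α ∈ range (n + 2), uu n α * cc j α
        - ((j : ℝ) + 1) * ((j : ℝ) + 2) * ∑ α ∈ range (n + 2), uu n α * cc (j + 2) α := by
    rw [Finset.mul_sum, ← Finset.sum_sub_distrib, ← Finset.sum_add_distrib, ← Finset.sum_sub_distrib]
  rw [expand] at main0
  rw [e1, e2]
  linarith [main0]

/-! ### The right-hand side and its recurrence -/

noncomputable def Raux (n k : ℕ) : ℝ :=
  (-1 : ℝ) ^ ((n - k) / 2) * (-1 : ℝ) ^ n * ∑ α ∈ Finset.Icc k n, uu n α * cc k α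

lemma sum_ext (m k N : ℕ) (hm : 1 ≤ m) (hN : m ≤ N) :
    ∑ α ∈ Finset.Icc k m, uu m α * cc k α = ∑ α ∈ range (N + 1), uu m α * cc k α := by
  apply Finset.sum_subset
  · intro α hα
    simp only [Finset.mem_Icc] at hα
    simp only [Finset.mem_range]
    omega
  · intro α hα hα2
    simp only [Finset.mem_range] at hα
    simp only [Finset.mem_Icc, not_and, not_le] at hα2
    rcases le_or_gt α m with h1 | h1
    · have hαk : α < k := by
        by_contra hcon
        exact absurd (hα2 (by omega)) (by omega)
      match α with
      | 0 => rw [uu_zero hm, zero_mul]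
      | Nat.succ b => rw [cc_small (by omega) hαk, mul_zero]
    · rw [uu_vanish h1, zero_mul]

lemma Raux_rec (n j : ℕ) (hn : 1 ≤ n) (hpar : n % 2 = j % 2) :
    Raux (n + 1) (j + 1) = Raux n j + ((j : ℝ) + 1) * ((j : ℝ) + 2) * Raux n (j + 2) := by
  rcases lt_or_ge n j with hnj | hjn
  · have h1 : Finset.Icc (j + 1) (n + 1) = ∅ := Finset.Icc_eq_empty (by omega)
    have h2 : Finset.Icc j n = ∅ := Finset.Icc_eq_empty (by omega)
    have h3 : Finset.Icc (j + 2) n = ∅ := Finset.Icc_eq_empty (by omega)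
    rw [Raux, Raux, Raux, h1, h2, h3]
    simp
  · have hLHS : Raux (n + 1) (j + 1)
        = (-1 : ℝ) ^ ((n - j) / 2) * (-1 : ℝ) ^ (n + 1)
          * ∑ α ∈ range (n + 2), uu (n + 1) α * cc (j + 1) α := by
      rw [Raux, sum_ext (n + 1) (j + 1) (n + 1) (by omega) le_rfl,
          show n + 1 - (j + 1) = n - j from by omega]
    have hj : Raux n j
        = (-1 : ℝ) ^ ((n - j) / 2) * (-1 : ℝ) ^ n * ∑ α ∈ range (n + 2), uu n α * cc j α := by
      rw [Raux, sum_ext n j (n + 1) hn (by omega)]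
    rw [hLHS, core n j hn]
    rcases lt_or_ge n (j + 2) with h2 | h2
    · have hz : ∑ α ∈ range (n + 2), uu n α * cc (j + 2) α = 0 := by
        rw [← sum_ext n (j + 2) (n + 1) hn (by omega), Finset.Icc_eq_empty (by omega),
          Finset.sum_empty]
      have hz2 : Raux n (j + 2) = 0 := by
        rw [Raux, Finset.Icc_eq_empty (by omega), Finset.sum_empty, mul_zero]
      rw [hz, hz2, hj]
      rw [pow_succ]
      ring
    · have hj2 : Raux n (j + 2)
          = (-1 : ℝ) ^ ((n - (j + 2)) / 2) * (-1 : ℝ) ^ n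
            * ∑ α ∈ range (n + 2), uu n α * cc (j + 2) α := by
        rw [Raux, sum_ext n (j + 2) (n + 1) hn (by omega)]
      rw [hj, hj2, show (n - j) / 2 = (n - (j + 2)) / 2 + 1 from by omega]
      rw [pow_succ, pow_succ]
      ring

/-! ### Analytic side -/

open Topology in
lemma iterWithin_eq {f : ℝ → ℝ} {s : Set ℝ} {x : ℝ} (hs : IsOpen s) (hx : x ∈ s) (n : ℕ) :
    iteratedDerivWithin n f s x = iteratedDeriv n f x := by
  rw [iteratedDerivWithin_eq_iteratedFDerivWithin, iteratedDeriv_eq_iteratedFDeriv,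
    iteratedFDerivWithin_of_isOpen n hs hx]

open Topology in
lemma A_rec (n k : ℕ) :
    iteratedDeriv (n + 1) (fun t : ℝ => Real.tan t ^ (k + 1)) 0
      = ((k : ℝ) + 1) * iteratedDeriv n (fun t : ℝ => Real.tan t ^ k) 0
        + ((k : ℝ) + 1) * iteratedDeriv n (fun t : ℝ => Real.tan t ^ (k + 2)) 0 := by
  set s : Set ℝ := Set.Ioo (-(π / 2)) (π / 2) with hs_def
  have hs : IsOpen s := isOpen_Ioo
  have h0 : (0 : ℝ) ∈ s := by
    constructor <;> simp [Real.pi_pos, Real.pi_div_two_pos, neg_lt_zero]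
  have hcos : ∀ x ∈ s, Real.cos x ≠ 0 := fun x hx => (Real.cos_pos_of_mem_Ioo hx).ne'
  have hderiv : ∀ x ∈ s, deriv (fun t => Real.tan t ^ (k + 1)) x
      = ((k : ℝ) + 1) * Real.tan x ^ k + ((k : ℝ) + 1) * Real.tan x ^ (k + 2) := by
    intro x hx
    have h1 : HasDerivAt Real.tan (1 / Real.cos x ^ 2) x := Real.hasDerivAt_tan (hcos x hx)
    have h2 : HasDerivAt (fun t => Real.tan t ^ (k + 1))
        (((k : ℝ) + 1) * Real.tan x ^ k * (1 / Real.cos x ^ 2)) x := by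
      simpa using h1.fun_pow (k + 1)
    rw [h2.deriv]
    have h3 : Real.tan x ^ 2 + 1 = 1 / Real.cos x ^ 2 := by
      have hsc := Real.sin_sq_add_cos_sq x
      have hc := hcos x hx
      rw [Real.tan_eq_sin_div_cos]
      field_simp
      exact hsc
    rw [← h3]
    ring
  have hev : deriv (fun t : ℝ => Real.tan t ^ (k + 1))
      =ᶠ[𝓝 (0 : ℝ)] fun t => ((k : ℝ) + 1) * Real.tan t ^ k + ((k : ℝ) + 1) * Real.tan t ^ (k + 2) := by
    filter_upwards [hs.mem_nhds h0] with x hx using hderiv x hx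
  rw [iteratedDeriv_succ', Filter.EventuallyEq.iteratedDeriv_eq n hev]
  have htan : ∀ m : ℕ, ContDiffOn ℝ (n : ℕ∞) (fun t : ℝ => Real.tan t ^ m) s := by
    intro m
    apply ContDiffOn.pow
    intro x hx
    exact (Real.contDiffAt_tan.2 (hcos x hx)).contDiffWithinAt
  have hud : UniqueDiffOn ℝ s := hs.uniqueDiffOn
  have key : iteratedDeriv n
      (fun t => ((k : ℝ) + 1) * Real.tan t ^ k + ((k : ℝ) + 1) * Real.tan t ^ (k + 2)) 0
      = ((k : ℝ) + 1) * iteratedDeriv n (fun t : ℝ => Real.tan t ^ k) 0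
        + ((k : ℝ) + 1) * iteratedDeriv n (fun t : ℝ => Real.tan t ^ (k + 2)) 0 := by
    rw [← iterWithin_eq hs h0, ← iterWithin_eq hs h0, ← iterWithin_eq hs h0]
    have hsplit : (fun t => ((k : ℝ) + 1) * Real.tan t ^ k + ((k : ℝ) + 1) * Real.tan t ^ (k + 2))
        = (fun t => ((k : ℝ) + 1) * Real.tan t ^ k) + (fun t => ((k : ℝ) + 1) * Real.tan t ^ (k + 2)) := rfl
    have hf1 : ContDiffOn ℝ (n : ℕ∞) (fun t : ℝ => ((k : ℝ) + 1) * Real.tan t ^ k) s :=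
      contDiffOn_const.mul (htan k)
    have hf2 : ContDiffOn ℝ (n : ℕ∞) (fun t : ℝ => ((k : ℝ) + 1) * Real.tan t ^ (k + 2)) s :=
      contDiffOn_const.mul (htan (k + 2))
    rw [hsplit, iteratedDerivWithin_add h0 hud (hf1 0 h0) (hf2 0 h0),
      iteratedDerivWithin_const_mul h0 hud _ (htan k 0 h0),
      iteratedDerivWithin_const_mul h0 hud _ (htan (k + 2) 0 h0)]
  rw [key]

/-! ### T-side lemmas -/

lemma iter_zero_fun : ∀ m : ℕ, iteratedDeriv m (fun _ : ℝ => (0 : ℝ)) = fun _ => (0 : ℝ) := by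
  intro m
  induction m with
  | zero => rw [iteratedDeriv_zero]
  | succ p IH =>
    rw [iteratedDeriv_succ, IH]
    funext x
    exact deriv_const x 0

lemma T_zero_k {n : ℕ} (hn : 1 ≤ n) : T n 0 = 0 := by
  obtain ⟨m, rfl⟩ : ∃ m, n = m + 1 := ⟨n - 1, by omega⟩
  rw [T]
  have h1 : (fun t : ℝ => Real.tan t ^ 0) = fun _ : ℝ => (1 : ℝ) := by
    funext t; rw [pow_zero]
  rw [h1, iteratedDeriv_succ']
  have h2 : deriv (fun _ : ℝ => (1 : ℝ)) = fun _ : ℝ => (0 : ℝ) := by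
    funext x; exact deriv_const x 1
  rw [h2, iter_zero_fun]
  simp

lemma T_rec (m j : ℕ) :
    T (m + 1) (j + 1) = T m j + ((j : ℝ) + 1) * ((j : ℝ) + 2) * T m (j + 2) := by
  rw [T, T, T, A_rec m j]
  have e1 : ((j + 1).factorial : ℝ) = ((j : ℝ) + 1) * (j.factorial : ℝ) := by
    rw [Nat.factorial_succ]; push_cast; ring
  have e2 : ((j + 2).factorial : ℝ) = ((j : ℝ) + 2) * ((j : ℝ) + 1) * (j.factorial : ℝ) := by
    rw [show j + 2 = (j + 1) + 1 from rfl, Nat.factorial_succ, Nat.factorial_succ]; push_cast; ring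
  rw [e1, e2]
  have h1 : (j.factorial : ℝ) ≠ 0 := Nat.cast_ne_zero.mpr j.factorial_ne_zero
  have h2 : ((j : ℝ) + 1) ≠ 0 := by positivity
  have h3 : ((j : ℝ) + 2) ≠ 0 := by positivity
  field_simp

lemma T_one (k : ℕ) : T 1 (k + 1) = ((k : ℝ) + 1) * (0 : ℝ) ^ k / ((k + 1).factorial : ℝ) := by
  rw [T, show (1 : ℕ) = 0 + 1 from rfl, A_rec 0 k, iteratedDeriv_zero, iteratedDeriv_zero]
  norm_num [Real.tan_zero]

/-! ### Base cases for the RHS -/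

lemma Raux_zero_k (n : ℕ) : Raux n 0 = 0 := by
  rw [Raux]
  have : ∀ α ∈ Finset.Icc 0 n, uu n α * cc 0 α = 0 := by
    intro α _
    rw [cc_zero_left, mul_zero]
  rw [Finset.sum_congr rfl this]
  simp

lemma Raux_one_one : Raux 1 1 = 1 := by
  rw [Raux, show Finset.Icc 1 1 = {1} from rfl, Finset.sum_singleton]
  rw [uu]
  rw [stirling2_diag 1, show cc 1 1 = cc (0 + 1) (0 + 1) from rfl, cc_succ]
  norm_num [Nat.factorial]

lemma Raux_one_big (j : ℕ) : Raux 1 (j + 2) = 0 := by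
  rw [Raux, Finset.Icc_eq_empty (by omega), Finset.sum_empty, mul_zero]

/-! ### Main theorem -/

theorem stmt15 (n k : ℕ) (hn : 1 ≤ n) (hpar : n % 2 = k % 2) :
    T n k = (-1 : ℝ) ^ ((n - k) / 2) * (-1 : ℝ) ^ n *
      ∑ α ∈ Finset.Icc k n,
        (-1 : ℝ) ^ α * (2 : ℝ) ^ (n - α) * stirling2 n α *
          chooseZ (α - 1) ((k : ℤ) - 1) * (α.factorial : ℝ) / (k.factorial : ℝ) := by
  have main : ∀ n k : ℕ, 1 ≤ n → n % 2 = k % 2 → T n k = Raux n k := by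
    intro n
    induction n with
    | zero => intro k h hp; omega
    | succ m IH =>
      intro k h1 hp
      rcases Nat.eq_zero_or_pos m with rfl | hm
      · -- n = 1, k odd
        rcases k with _ | k
        · omega
        rcases k with _ | j
        · rw [show (0:ℕ)+1 = 1 from rfl] at *
          rw [show T 1 1 = T 1 (0 + 1) from rfl, T_one, Raux_one_one]
          norm_num [Nat.factorial]
        · rw [show j+1+1 = j+2 from rfl, show T 1 (j + 2) = T 1 ((j + 1) + 1) from rfl, T_one,
            Raux_one_big]
          rw [zero_pow (by omega : j + 1 ≠ 0)]
          simp
      · rcases k with _ | j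
        · rw [T_zero_k (by omega), Raux_zero_k]
        · rw [T_rec, IH j (by omega) (by omega), IH (j + 2) (by omega) (by omega),
            ← Raux_rec m j hm (by omega)]
  rw [main n k hn hpar, Raux]
  congr 1
  apply Finset.sum_congr rfl
  intro α _
  rw [uu, cc]
  ring
end

section
/- For every n ≥ 0 and every x with |x| < π/2, the n-th derivative of sec at x equals sec(x) · Σ_{k=0}^{n} k! · S(n,k) · tan(x)^k, where S(n,k) are the higher-order secant numbers. -/
open Real Finset Topology

noncomputable def fsec (k : ℕ) (t : ℝ) : ℝ := Real.tan t ^ k / Real.cos t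

lemma hasDerivAt_fsec (k : ℕ) {x : ℝ} (hx : Real.cos x ≠ 0) :
    HasDerivAt (fsec k) ((k : ℝ) * fsec (k - 1) x + ((k : ℝ) + 1) * fsec (k + 1) x) x := by
  have ht := Real.hasDerivAt_tan hx
  have hu : HasDerivAt (fun t => Real.tan t ^ k)
      ((k : ℝ) * Real.tan x ^ (k - 1) * (1 / Real.cos x ^ 2)) x := ht.pow k
  have hc : HasDerivAt Real.cos (-Real.sin x) x := Real.hasDerivAt_cos x
  have h := hu.div hc hx
  have hsc := Real.sin_sq_add_cos_sq x
  refine h.congr_deriv ?_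
  symm
  unfold fsec
  cases k with
  | zero =>
      simp only [Nat.cast_zero, zero_mul, pow_zero, pow_one, zero_add, one_mul]
      rw [Real.tan_eq_sin_div_cos, div_div, sq]
      ring
  | succ m =>
      simp only [Nat.add_sub_cancel]
      have hs : Real.sin x = Real.tan x * Real.cos x := by
        rw [Real.tan_eq_sin_div_cos]; field_simp
      have hk : Real.tan x ^ 2 + 1 = 1 / Real.cos x ^ 2 := by
        rw [Real.tan_eq_sin_div_cos]; field_simp; linear_combination hsc
      rw [hs, ← hk]
      push_cast
      field_simp
      ring

noncomputable def aCoef : ℕ → ℕ → ℝ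
  | 0, k => if k = 0 then 1 else 0
  | n + 1, k => ((k : ℝ) + 1) * aCoef n (k + 1) + (k : ℝ) * aCoef n (k - 1)

lemma aCoef_eq_zero : ∀ n k, n < k → aCoef n k = 0 := by
  intro n
  induction n with
  | zero => intro k hk; simp only [aCoef, if_neg (by omega : ¬ k = 0)]
  | succ n ih =>
      intro k hk
      have h1 : aCoef n (k + 1) = 0 := ih _ (by omega)
      have h2 : aCoef n (k - 1) = 0 := ih _ (by omega)
      simp [aCoef, h1, h2]

lemma sum_step (n : ℕ) (F : ℕ → ℝ) :
    ∑ j ∈ range (n + 1), aCoef n j * ((j : ℝ) * F (j - 1) + ((j : ℝ) + 1) * F (j + 1)) =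
    ∑ k ∈ range (n + 2), aCoef (n + 1) k * F k := by
  have h1 : ∀ k : ℕ, aCoef (n + 1) k
      = ((k : ℝ) + 1) * aCoef n (k + 1) + (k : ℝ) * aCoef n (k - 1) := fun k => rfl
  have eqA : ∑ j ∈ range (n + 1), aCoef n j * ((j : ℝ) * F (j - 1))
      = ∑ k ∈ range (n + 2), ((k : ℝ) + 1) * aCoef n (k + 1) * F k := by
    rw [Finset.sum_range_succ', Finset.sum_range_succ, Finset.sum_range_succ]
    rw [aCoef_eq_zero n (n + 1 + 1) (by omega), aCoef_eq_zero n (n + 1) (by omega)]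
    simp only [Nat.cast_zero, Nat.cast_ofNat, CharP.cast_eq_zero, zero_mul, mul_zero, add_zero, zero_add]
    refine Finset.sum_congr rfl fun i _ => ?_
    push_cast
    ring
  have eqB : ∑ j ∈ range (n + 1), aCoef n j * (((j : ℝ) + 1) * F (j + 1))
      = ∑ k ∈ range (n + 2), (k : ℝ) * aCoef n (k - 1) * F k := by
    rw [Finset.sum_range_succ' (fun k => (k : ℝ) * aCoef n (k - 1) * F k) (n + 1)]
    simp only [Nat.cast_zero, zero_mul, add_zero, Nat.add_sub_cancel]
    refine Finset.sum_congr rfl fun i _ => ?_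
    push_cast
    ring
  calc ∑ j ∈ range (n + 1), aCoef n j * ((j : ℝ) * F (j - 1) + ((j : ℝ) + 1) * F (j + 1))
      = (∑ j ∈ range (n + 1), aCoef n j * ((j : ℝ) * F (j - 1)))
        + ∑ j ∈ range (n + 1), aCoef n j * (((j : ℝ) + 1) * F (j + 1)) := by
        rw [← Finset.sum_add_distrib]; exact Finset.sum_congr rfl fun j _ => by ring
    _ = (∑ k ∈ range (n + 2), ((k : ℝ) + 1) * aCoef n (k + 1) * F k)
        + ∑ k ∈ range (n + 2), (k : ℝ) * aCoef n (k - 1) * F k := by rw [eqA, eqB]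
    _ = ∑ k ∈ range (n + 2), aCoef (n + 1) k * F k := by
        rw [← Finset.sum_add_distrib]
        exact Finset.sum_congr rfl fun k _ => by rw [h1]; ring

lemma hUopen : IsOpen {x : ℝ | Real.cos x ≠ 0} :=
  isOpen_compl_singleton.preimage Real.continuous_cos

lemma contDiffOn_fsec (k : ℕ) (m : ℕ) :
    ContDiffOn ℝ m (fsec k) {x : ℝ | Real.cos x ≠ 0} := by
  apply ContDiffOn.div
  · intro x hx
    exact ((Real.contDiffAt_tan.mpr hx).pow k).contDiffWithinAt
  · exact Real.contDiff_cos.contDiffOn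
  · exact fun x hx => hx

lemma iter_within (n : ℕ) (f : ℝ → ℝ) {x : ℝ} (hx : Real.cos x ≠ 0) :
    iteratedDerivWithin n f {x : ℝ | Real.cos x ≠ 0} x = iteratedDeriv n f x := by
  rw [iteratedDerivWithin_eq_iteratedFDerivWithin, iteratedDeriv_eq_iteratedFDeriv,
    iteratedFDerivWithin_of_isOpen n hUopen hx]

lemma iter_fk : ∀ n k : ℕ, iteratedDeriv n (fsec k) 0 = aCoef n k := by
  intro n
  induction n with
  | zero =>
      intro k
      rw [iteratedDeriv_zero]
      cases k with
      | zero => simp [fsec, aCoef]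
      | succ m => simp [fsec, aCoef, Real.tan_zero, zero_pow]
  | succ n ih =>
      intro k
      have h0 : Real.cos (0 : ℝ) ≠ 0 := by simp
      have hmem : (0 : ℝ) ∈ {x : ℝ | Real.cos x ≠ 0} := h0
      have hev : deriv (fsec k) =ᶠ[𝓝 (0 : ℝ)]
          fun y => (k : ℝ) * fsec (k - 1) y + ((k : ℝ) + 1) * fsec (k + 1) y := by
        filter_upwards [hUopen.mem_nhds hmem] with y hy
        exact (hasDerivAt_fsec k hy).deriv
      rw [iteratedDeriv_succ', hev.iteratedDeriv_eq n, ← iter_within n _ h0]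
      have hud : UniqueDiffOn ℝ {x : ℝ | Real.cos x ≠ 0} := hUopen.uniqueDiffOn
      have hf : ContDiffOn ℝ n (fun y => (k : ℝ) * fsec (k - 1) y) {x : ℝ | Real.cos x ≠ 0} :=
        contDiffOn_const.mul (contDiffOn_fsec (k - 1) n)
      have hg : ContDiffOn ℝ n (fun y => ((k : ℝ) + 1) * fsec (k + 1) y)
          {x : ℝ | Real.cos x ≠ 0} := contDiffOn_const.mul (contDiffOn_fsec (k + 1) n)
      have hsplit : (fun y => (k : ℝ) * fsec (k - 1) y + ((k : ℝ) + 1) * fsec (k + 1) y)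
          = ((fun y => (k : ℝ) * fsec (k - 1) y) + fun y => ((k : ℝ) + 1) * fsec (k + 1) y) := rfl
      rw [hsplit, iteratedDerivWithin_add hmem hud (hf _ hmem) (hg _ hmem),
        iteratedDerivWithin_const_mul hmem hud _ (contDiffOn_fsec (k - 1) n _ hmem),
        iteratedDerivWithin_const_mul hmem hud _ (contDiffOn_fsec (k + 1) n _ hmem),
        iter_within n _ h0, iter_within n _ h0, ih, ih]
      rw [show aCoef (n + 1) k
        = ((k : ℝ) + 1) * aCoef n (k + 1) + (k : ℝ) * aCoef n (k - 1) from rfl]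
      ring

lemma iter_f0 (n : ℕ) : ∀ x : ℝ, Real.cos x ≠ 0 →
    iteratedDeriv n (fsec 0) x = ∑ j ∈ range (n + 1), aCoef n j * fsec j x := by
  induction n with
  | zero => intro x hx; simp [aCoef]
  | succ n ih =>
      intro x hx
      have hmem : x ∈ {x : ℝ | Real.cos x ≠ 0} := hx
      have hev : iteratedDeriv n (fsec 0) =ᶠ[𝓝 x]
          fun y => ∑ j ∈ range (n + 1), aCoef n j * fsec j y := by
        filter_upwards [hUopen.mem_nhds hmem] with y hy using ih y hy
      rw [iteratedDeriv_succ, hev.deriv_eq]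
      have hs : HasDerivAt (fun y => ∑ j ∈ range (n + 1), aCoef n j * fsec j y)
          (∑ j ∈ range (n + 1),
            aCoef n j * ((j : ℝ) * fsec (j - 1) x + ((j : ℝ) + 1) * fsec (j + 1) x)) x := by
        apply HasDerivAt.fun_sum
        intro j hj
        exact (hasDerivAt_fsec j hx).const_mul _
      rw [hs.deriv, sum_step n (fun j => fsec j x)]

theorem stmt18 (n : ℕ) (x : ℝ) (hx : |x| < Real.pi / 2) :
    iteratedDeriv n (fun t : ℝ => 1 / Real.cos t) x =
      (1 / Real.cos x) * ∑ k ∈ Finset.range (n + 1),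
        (k.factorial : ℝ) * S n k * Real.tan x ^ k := by
  have habs := abs_lt.mp hx
  have hcos : Real.cos x ≠ 0 := (Real.cos_pos_of_mem_Ioo ⟨habs.1, habs.2⟩).ne'
  have hfun : (fun t : ℝ => 1 / Real.cos t) = fsec 0 := by funext t; simp [fsec]
  rw [hfun, iter_f0 n x hcos, Finset.mul_sum]
  refine Finset.sum_congr rfl fun k hk => ?_
  have hS : S n k = aCoef n k / (Nat.factorial k : ℝ) := by
    unfold S
    rw [show (fun t : ℝ => Real.tan t ^ k / Real.cos t) = fsec k from rfl, iter_fk n k]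
  rw [hS]
  have hkf : (Nat.factorial k : ℝ) ≠ 0 := Nat.cast_ne_zero.mpr k.factorial_ne_zero
  unfold fsec
  field_simp
end
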